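/- For all x < y in E_J: P_{x,y} − 𝓡_{x,y} = Σ_{x ≤ t < y, t ∈ E_J} q_t^{−1} q_y 𝓡_{x,t} bar(P_{t,y}), where 𝓡_{x,t} denotes the 𝓡-polynomial of the length-one multichain x ≤ t. -/

import Mathlib

set_option linter.unusedVariables false

open scoped Classical
noncomputable section
namespace WGI

variable (Γ : Type) [AddCommGroup Γ] [LinearOrder Γ] [IsOrderedAddMonoid Γ]

/-- The group ring `ℤ[Γ]`, with basis `{q^γ : γ ∈ Γ}`. -/
abbrev LZ := AddMonoidAlgebra ℤ Γ

/-- The basis element `q^γ` of `ℤ[Γ]`. -/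
def qp (γ : Γ) : LZ Γ := AddMonoidAlgebra.single γ 1

/-- The bar involution of `ℤ[Γ]`, sending `q^γ` to `q^{-γ}`. -/
def barZ : LZ Γ ≃+* LZ Γ :=
  (AddMonoidAlgebra.domCongr ℤ ℤ (AddEquiv.neg Γ)).toRingEquiv

/-- The coefficient `[q^γ] f`. -/
def coeffq (f : LZ Γ) (γ : Γ) : ℤ := f.coeff γ

/-- The degree of `f ∈ ℤ[Γ]`: the maximum `γ` with `[q^γ] f ≠ 0` (`⊥` for `f = 0`). -/
def degq (f : LZ Γ) : WithBot Γ := f.coeff.support.max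

/-- The truncation `U_{α/2}(f) = Σ_{2γ > α} [q^γ]f · q^γ`. -/
def Uhalf (α : Γ) (f : LZ Γ) : LZ Γ := AddMonoidAlgebra.ofCoeff (Finsupp.filter (fun γ => α < γ + γ) f.coeff)

/-- The truncation `L_{α/2}(f) = Σ_{2γ < α} [q^γ]f · q^γ`. -/
def Lhalf (α : Γ) (f : LZ Γ) : LZ Γ := AddMonoidAlgebra.ofCoeff (Finsupp.filter (fun γ => γ + γ < α) f.coeff)

variable {B W : Type} [Group W] {M : CoxeterMatrix B} (cs : CoxeterSystem M W)

/-- The sign `ε_w = (-1)^{ℓ(w)}`. -/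
def eps (w : W) : ℤ := (-1) ^ (cs.length w)

/-- The Bruhat order on `W`: generated by `u < tu` for reflections `t` with `ℓ(u) < ℓ(tu)`. -/
def BruhatLE : W → W → Prop :=
  Relation.ReflTransGen (fun u v => cs.length u < cs.length v ∧ ∃ t, cs.IsReflection t ∧ v = t * u)

/-- The strict Bruhat order. -/
def BruhatLT (u v : W) : Prop := BruhatLE cs u v ∧ u ≠ v

/-- `x` is a suffix of `y` iff `y = z * x` with `ℓ(y) = ℓ(z) + ℓ(x)`; this is the
left weak Bruhat order `x ≤_L y`. -/
def IsSuffix (x y : W) : Prop := ∃ z, y = z * x ∧ cs.length y = cs.length z + cs.length x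

/-- The set `D_J` of minimum coset representatives. -/
def DJ (J : Set B) : Set W := {w | ∀ j ∈ J, cs.length w < cs.length (w * cs.simple j)}

/-- The subgroup `Γ″` of `Γ` generated by the values `L(s)`, `s ∈ S`. -/
def GammaPP (L : W → Γ) : AddSubgroup Γ :=
  AddSubgroup.closure (Set.range fun i : B => L (cs.simple i))

/-- `f` lies in the subring `ℤ[Γ′]` of `ℤ`-linear combinations of products `∏ q_{s_i}^{n_i}`,
equivalently the support of `f` is contained in `Γ″`. -/
def InZGammaPrime (L : W → Γ) (f : LZ Γ) : Prop :=
  ∀ γ ∈ f.coeff.support, γ ∈ GammaPP Γ cs L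

/-- The `𝓡`-polynomial of a length-one multichain:
`𝓡_{x,y} = q_x^{-1} q_y · bar(R_{x,y})`. -/
def Rsingle (L : W → Γ) (Rp : W → W → LZ Γ) (x y : W) : LZ Γ :=
  qp Γ (L y - L x) * barZ Γ (Rp x y)

/-- The `𝓡`-polynomial `𝓡_φ` of a multichain `φ : x = c 0 ≤ c 1 ≤ ⋯ ≤ c (r+1) = y`,
defined recursively by `𝓡_φ = 𝓡_{x,x₁} · U_{(L(y)-L(x₁))/2}(q_{x₁}^{-1} q_y bar(𝓡_{φ'}))`
where `φ'` is the tail of `φ`. -/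
def RchainAux (L : W → Γ) (Rp : W → W → LZ Γ) : (r : ℕ) → (Fin (r + 2) → W) → LZ Γ
  | 0, c => Rsingle Γ L Rp (c 0) (c 1)
  | r + 1, c =>
      Rsingle Γ L Rp (c 0) (c 1) *
        Uhalf Γ (L (c (Fin.last (r + 2))) - L (c 1))
          (qp Γ (L (c (Fin.last (r + 2))) - L (c 1)) *
            barZ Γ (RchainAux L Rp r (fun i => c i.succ)))

/-- The `𝓡*`-polynomial `𝓡*_φ` of a multichain `φ : x = c 0 ≤ ⋯ ≤ c (r+1) = y`,
defined recursively by `𝓡*_φ = U_{(L(x_r)-L(x))/2}(q_x^{-1} q_{x_r} bar(𝓡*_{φ'})) · 𝓡*_{x_r,y}`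
where `φ'` is the initial segment of `φ`. -/
def RstarAux (L : W → Γ) (Rt : W → W → LZ Γ) : (r : ℕ) → (Fin (r + 2) → W) → LZ Γ
  | 0, c => Rsingle Γ L Rt (c 0) (c 1)
  | r + 1, c =>
      Uhalf Γ (L (c ⟨r + 1, by omega⟩) - L (c 0))
          (qp Γ (L (c ⟨r + 1, by omega⟩) - L (c 0)) *
            barZ Γ (RstarAux L Rt r (fun i => c i.castSucc))) *
        Rsingle Γ L Rt (c ⟨r + 1, by omega⟩) (c (Fin.last (r + 2)))

/-- An `E_J`-multichain `x = x₀ ≤ x₁ ≤ ⋯ ≤ x_{r+1} = y` (Bruhat order) with all entries in `E`. -/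
structure MChain (E : Set W) (x y : W) where
  r : ℕ
  c : Fin (r + 2) → W
  first : c 0 = x
  last : c (Fin.last (r + 1)) = y
  mem : ∀ i, c i ∈ E
  mono : ∀ i : Fin (r + 1), BruhatLE cs (c i.castSucc) (c i.succ)

/-- An `E_J`-multichain is an `E_J`-chain when all steps are strict. -/
def MChain.IsStrict {E : Set W} {x y : W} (φ : MChain cs E x y) : Prop :=
  ∀ i : Fin (φ.r + 1), BruhatLT cs (φ.c i.castSucc) (φ.c i.succ)

/-- Auxiliary group identity. -/
private lemma conj_eq_iff (a u t : W) : a * t * a⁻¹ = u ↔ t = a⁻¹ * u * a := by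
  constructor <;> intro h
  · rw [← h]; group
  · rw [h]; group

private lemma SEfun_invol (i : B) : Function.Involutive
    (fun p : W × ZMod 2 =>
      (cs.simple i * p.1 * cs.simple i, p.2 + if p.1 = cs.simple i then 1 else 0)) := by
  intro p
  have h1 : cs.simple i * (cs.simple i * p.1 * cs.simple i) * cs.simple i = p.1 := by
    simp [mul_assoc, cs.simple_mul_simple_self, cs.simple_mul_simple_cancel_left]
  have h2 : (cs.simple i * p.1 * cs.simple i = cs.simple i) ↔ (p.1 = cs.simple i) := by
    have h0 : cs.simple i * p.1 * cs.simple i = cs.simple i * p.1 * (cs.simple i)⁻¹ := by simp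
    rw [h0, conj_eq_iff]
    simp [mul_assoc, cs.simple_mul_simple_cancel_left]
  refine Prod.ext h1 ?_
  simp only [h2, add_assoc]
  rcases Classical.em (p.1 = cs.simple i) with h | h <;>
    simp [h, CharTwo.add_self_eq_zero]

/-- The permutation of `W × ZMod 2` attached to the simple reflection `s i`. -/
def SEperm (i : B) : Equiv.Perm (W × ZMod 2) := (SEfun_invol cs i).toPerm

lemma SEperm_apply (i : B) (q : W × ZMod 2) :
    SEperm cs i q =
      (cs.simple i * q.1 * cs.simple i, q.2 + if q.1 = cs.simple i then 1 else 0) := rfl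

private lemma sum_pair_eq (mm : ℕ) (h : ℕ → ZMod 2) :
    ∑ l ∈ Finset.range mm, (h (2 * l) + h (2 * l + 1)) = ∑ k ∈ Finset.range (2 * mm), h k := by
  induction mm with
  | zero => simp
  | succ m ih =>
      rw [Finset.sum_range_succ, ih]
      have : 2 * (m + 1) = (2 * m + 1) + 1 := by ring
      rw [this, Finset.sum_range_succ, Finset.sum_range_succ, add_assoc]

lemma SEliftable : ∀ i j : B, (SEperm cs (W := W) i * SEperm cs j) ^ M i j = 1 := by
  intro i j
  obtain ⟨p, hp⟩ : ∃ p : W, p = cs.simple i * cs.simple j := ⟨_, rfl⟩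
  have hpm : p ^ M i j = 1 := by rw [hp]; exact cs.simple_mul_simple_pow i j
  have hpinv_sj : p⁻¹ * cs.simple j = cs.simple j * p := by
    rw [hp]; simp [mul_inv_rev, mul_assoc]
  have hconj : ∀ l : ℕ, (p⁻¹) ^ l * cs.simple j * p ^ l = cs.simple j * p ^ (2 * l) := by
    intro l
    induction l with
    | zero => simp
    | succ l ih =>
        have h1 : (p⁻¹) ^ (l + 1) * cs.simple j * p ^ (l + 1)
            = p⁻¹ * ((p⁻¹) ^ l * cs.simple j * p ^ l) * p := by
          rw [pow_succ, pow_succ]; group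
        rw [h1, ih]
        have h2 : 2 * (l + 1) = (2 * l + 1) + 1 := by ring
        rw [h2, pow_succ, pow_succ, ← mul_assoc, ← mul_assoc, hpinv_sj]
        group
  have hconj2 : ∀ l : ℕ,
      (p⁻¹) ^ l * (cs.simple j * cs.simple i * cs.simple j) * p ^ l
        = cs.simple j * p ^ (2 * l + 1) := by
    intro l
    have h1 : cs.simple j * cs.simple i * cs.simple j = cs.simple j * p := by
      rw [hp, mul_assoc]
    rw [h1, ← mul_assoc, mul_assoc, ← pow_succ', pow_succ, ← mul_assoc, hconj l,
      mul_assoc, ← pow_succ]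
  obtain ⟨c, hc_def⟩ : ∃ c : ℕ → W → ZMod 2, c = fun l t =>
    (if p ^ l * t * (p ^ l)⁻¹ = cs.simple j then 1 else 0)
      + (if p ^ l * t * (p ^ l)⁻¹ = cs.simple j * cs.simple i * cs.simple j then 1 else 0) :=
    ⟨_, rfl⟩
  have hpow : ∀ (k : ℕ) (t : W) (ε : ZMod 2),
      ((SEperm cs i * SEperm cs j) ^ k) (t, ε)
        = (p ^ k * t * (p ^ k)⁻¹, ε + ∑ l ∈ Finset.range k, c l t) := by
    intro k
    induction k with
    | zero => intro t ε; simp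
    | succ k ih =>
        intro t ε
        have hstep : (SEperm cs i * SEperm cs j) (t, ε) = (p * t * p⁻¹, ε + c 0 t) := by
          have hiff : (cs.simple j * t * cs.simple j = cs.simple i)
              ↔ (t = cs.simple j * cs.simple i * cs.simple j) := by
            have : cs.simple j * t * cs.simple j = cs.simple j * t * (cs.simple j)⁻¹ := by simp
            rw [this, conj_eq_iff]
            simp [mul_assoc]
          simp only [Equiv.Perm.mul_apply, SEperm_apply]
          refine Prod.ext ?_ ?_
          · simp only [hp]
            simp [mul_inv_rev, mul_assoc]
          · simp only [hc_def, pow_zero, one_mul, inv_one, mul_one, hiff]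
            simp [add_assoc]
        rw [pow_succ, Equiv.Perm.mul_apply, hstep, ih]
        have hc : ∀ l, c l (p * t * p⁻¹) = c (l + 1) t := by
          intro l
          have harr : p ^ l * (p * t * p⁻¹) * (p ^ l)⁻¹ = p ^ (l + 1) * t * (p ^ (l + 1))⁻¹ := by
            rw [pow_succ]; group
          simp only [hc_def, harr]
        refine Prod.ext ?_ ?_
        · show p ^ k * (p * t * p⁻¹) * (p ^ k)⁻¹ = p ^ (k + 1) * t * (p ^ (k + 1))⁻¹
          rw [pow_succ]; group
        · show (ε + c 0 t) + ∑ l ∈ Finset.range k, c l (p * t * p⁻¹)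
            = ε + ∑ l ∈ Finset.range (k + 1), c l t
          rw [Finset.sum_congr rfl (fun l _ => hc l), Finset.sum_range_succ']
          ring
  apply Equiv.ext
  rintro ⟨t, ε⟩
  rw [hpow (M i j) t ε, hpm]
  have hcl : ∀ l, c l t = (if t = cs.simple j * p ^ (2 * l) then (1 : ZMod 2) else 0)
      + (if t = cs.simple j * p ^ (2 * l + 1) then 1 else 0) := by
    intro l
    have h1 : (p ^ l * t * (p ^ l)⁻¹ = cs.simple j) ↔ (t = cs.simple j * p ^ (2 * l)) := by
      rw [conj_eq_iff, ← inv_pow, hconj l]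
    have h2 : (p ^ l * t * (p ^ l)⁻¹ = cs.simple j * cs.simple i * cs.simple j)
        ↔ (t = cs.simple j * p ^ (2 * l + 1)) := by
      rw [conj_eq_iff]
      have : (p ^ l)⁻¹ * (cs.simple j * cs.simple i * cs.simple j) * p ^ l
          = cs.simple j * p ^ (2 * l + 1) := by
        rw [← inv_pow]; exact hconj2 l
      rw [this]
    simp only [hc_def, h1, h2]
  rw [Finset.sum_congr rfl (fun l _ => hcl l),
    sum_pair_eq (M i j) (fun k => if t = cs.simple j * p ^ k then (1 : ZMod 2) else 0)]
  have hper : ∀ k, (if t = cs.simple j * p ^ (M i j + k) then (1 : ZMod 2) else 0)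
      = (if t = cs.simple j * p ^ k then 1 else 0) := by
    intro k; rw [add_comm, pow_add, hpm, mul_one]
  rw [two_mul, Finset.sum_range_add]
  rw [Finset.sum_congr rfl (fun k _ => hper k), CharTwo.add_self_eq_zero]
  simp


/-- The parity representation `W →* Perm (W × ZMod 2)`. -/
def SErep : W →* Equiv.Perm (W × ZMod 2) :=
  cs.lift ⟨fun i => SEperm cs i, SEliftable cs⟩

lemma SErep_simple (i : B) : SErep cs (cs.simple i) = SEperm cs i :=
  cs.lift_apply_simple (SEliftable cs) i

/-- The parity cocycle. -/
def nuu (w t : W) : ZMod 2 := ((SErep cs w) (t, 0)).2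

private lemma SErep_word (ω : List B) : ∀ (t : W) (ε : ZMod 2),
    SErep cs (cs.wordProd ω) (t, ε)
      = (cs.wordProd ω * t * (cs.wordProd ω)⁻¹,
          ε + (SErep cs (cs.wordProd ω) (t, 0)).2) := by
  induction ω with
  | nil =>
      intro t ε
      simp [cs.wordProd_nil, map_one]
  | cons i ω ih =>
      intro t ε
      rw [cs.wordProd_cons, map_mul, Equiv.Perm.mul_apply, Equiv.Perm.mul_apply, ih t ε, ih t 0,
        SErep_simple, SEperm_apply, SEperm_apply]
      refine Prod.ext ?_ ?_
      · show cs.simple i * (cs.wordProd ω * t * (cs.wordProd ω)⁻¹) * cs.simple i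
          = (cs.simple i * cs.wordProd ω) * t * (cs.simple i * cs.wordProd ω)⁻¹
        rw [mul_inv_rev, cs.inv_simple]
        group
      · show (ε + _) + _ = ε + ((0 + _) + _)
        ring

lemma SErep_apply (w t : W) (ε : ZMod 2) :
    SErep cs w (t, ε) = (w * t * w⁻¹, ε + nuu cs w t) := by
  obtain ⟨ω, rfl⟩ := cs.wordProd_surjective w
  exact SErep_word cs ω t ε

lemma nuu_cocycle (u v t : W) : nuu cs (u * v) t = nuu cs v t + nuu cs u (v * t * v⁻¹) := by
  have h2 : SErep cs v (t, 0) = (v * t * v⁻¹, 0 + nuu cs v t) := SErep_apply cs v t 0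
  have h : SErep cs (u * v) (t, 0) = SErep cs u (v * t * v⁻¹, 0 + nuu cs v t) := by
    rw [map_mul, Equiv.Perm.mul_apply, h2]
  have h3 : ((SErep cs (u * v)) (t, 0)).2 = nuu cs (u * v) t := rfl
  rw [← h3, h, SErep_apply]
  simp

lemma nuu_one (t : W) : nuu cs 1 t = 0 := by
  unfold nuu
  rw [map_one]
  rfl

lemma nuu_simple (i : B) (t : W) :
    nuu cs (cs.simple i) t = if t = cs.simple i then 1 else 0 := by
  unfold nuu
  rw [SErep_simple, SEperm_apply]
  simp

lemma nuu_inv (w t : W) : nuu cs w⁻¹ (w * t * w⁻¹) = nuu cs w t := by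
  have h := nuu_cocycle cs w⁻¹ w t
  rw [inv_mul_cancel, nuu_one] at h
  have h2 : ∀ a b : ZMod 2, 0 = a + b → b = a := by decide
  exact h2 _ _ h

lemma nuu_refl_self {t : W} (ht : cs.IsReflection t) : nuu cs t t = 1 := by
  obtain ⟨w, i, rfl⟩ := ht
  have h0 : w * cs.simple i * w⁻¹ = w * (cs.simple i * w⁻¹) := by group
  rw [h0, nuu_cocycle]
  have h1 : cs.simple i * w⁻¹ * (w * (cs.simple i * w⁻¹)) * (cs.simple i * w⁻¹)⁻¹
      = cs.simple i := by
    rw [mul_inv_rev, cs.inv_simple]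
    group
    simp [cs.simple_mul_simple_cancel_left, mul_assoc]
  rw [h1, nuu_cocycle]
  have h2 : w⁻¹ * (w * (cs.simple i * w⁻¹)) * w⁻¹⁻¹ = cs.simple i := by group
  rw [h2, nuu_simple, if_pos rfl]
  have h3 : w * (cs.simple i * w⁻¹) = w * cs.simple i * w⁻¹ := by group
  rw [h3, nuu_inv]
  have h4 : ∀ a : ZMod 2, a + 1 + a = 1 := by decide
  exact h4 _

private lemma SErep_not_mem_ris (ω : List B) : ∀ (t : W) (ε : ZMod 2),
    t ∉ cs.rightInvSeq ω →
    SErep cs (cs.wordProd ω) (t, ε) = (cs.wordProd ω * t * (cs.wordProd ω)⁻¹, ε) := by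
  induction ω with
  | nil =>
      intro t ε _
      simp [cs.wordProd_nil, map_one]
  | cons i ω ih =>
      intro t ε hmem
      rw [CoxeterSystem.rightInvSeq, List.mem_cons] at hmem
      push_neg at hmem
      obtain ⟨h1, h2⟩ := hmem
      rw [cs.wordProd_cons, map_mul, Equiv.Perm.mul_apply, ih t ε h2, SErep_simple,
        SEperm_apply]
      have hcond : ¬(cs.wordProd ω * t * (cs.wordProd ω)⁻¹ = cs.simple i) := by
        intro hc
        apply h1
        rw [conj_eq_iff] at hc
        rw [hc]
      refine Prod.ext ?_ ?_
      · show cs.simple i * (cs.wordProd ω * t * (cs.wordProd ω)⁻¹) * cs.simple i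
          = (cs.simple i * cs.wordProd ω) * t * (cs.simple i * cs.wordProd ω)⁻¹
        rw [mul_inv_rev, cs.inv_simple]
        group
      · show ε + _ = ε
        rw [if_neg hcond, add_zero]

lemma mem_ris_of_nuu_ne_zero {ω : List B} {t : W} (h : nuu cs (cs.wordProd ω) t ≠ 0) :
    t ∈ cs.rightInvSeq ω := by
  by_contra hmem
  apply h
  unfold nuu
  rw [SErep_not_mem_ris cs ω t 0 hmem]

lemma nuu_eq_one_of_isRightInversion {w t : W} (h : cs.IsRightInversion w t) :
    nuu cs w t = 1 := by
  obtain ⟨ht, hlen⟩ := h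
  have hw : w = (w * t) * t := by
    rw [mul_assoc, ht.mul_self, mul_one]
  have htt : t * t * t⁻¹ = t := by rw [ht.mul_self, one_mul, ht.inv]
  have hcoc := nuu_cocycle cs (w * t) t t
  rw [htt, nuu_refl_self cs ht] at hcoc
  have hwt : nuu cs (w * t) t = 0 := by
    by_contra hne
    obtain ⟨ω, hred, hw'⟩ := cs.exists_reduced_word' (w * t)
    rw [hw'] at hne
    have hmem := mem_ris_of_nuu_ne_zero cs hne
    have hinv := cs.isRightInversion_of_mem_rightInvSeq hred hmem
    rw [← hw'] at hinv
    have h2 := hinv.2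
    rw [mul_assoc, ht.mul_self, mul_one] at h2
    omega
  rw [← hw] at hcoc
  rw [hcoc, hwt, add_zero]

theorem rightInversions_finite (w : W) : {t : W | cs.IsRightInversion w t}.Finite := by
  obtain ⟨ω, hred, hw⟩ := cs.exists_reduced_word' w
  apply Set.Finite.subset (cs.rightInvSeq ω).finite_toSet
  intro t ht
  have h1 : nuu cs w t = 1 := nuu_eq_one_of_isRightInversion cs ht
  rw [hw] at h1
  exact mem_ris_of_nuu_ne_zero cs (by rw [h1]; exact one_ne_zero)

theorem leftInversions_finite (w : W) : {t : W | cs.IsLeftInversion w t}.Finite := by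
  apply Set.Finite.subset (rightInversions_finite cs w⁻¹)
  intro t ht
  exact cs.isRightInversion_inv_iff.mpr ht



theorem bruhatLE_finite (y : W) : {t : W | BruhatLE cs t y}.Finite := by
  suffices h : ∀ n (y : W), cs.length y ≤ n → {t : W | BruhatLE cs t y}.Finite from
    h (cs.length y) y le_rfl
  intro n
  induction n with
  | zero =>
      intro y hy
      have hy1 : y = 1 := cs.length_eq_zero_iff.mp (Nat.le_zero.mp hy)
      subst hy1
      apply Set.Finite.subset (Set.finite_singleton 1)
      intro t ht
      rcases Relation.ReflTransGen.cases_tail ht with h1 | ⟨c, _, hc⟩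
      · simp [h1.symm]
      · exfalso
        have h2 := hc.1
        simp [cs.length_one] at h2
  | succ n ih =>
      intro y hy
      have hpredfin : {v : W | cs.length v < cs.length y
          ∧ ∃ t, cs.IsReflection t ∧ y = t * v}.Finite := by
        apply Set.Finite.subset ((leftInversions_finite cs y).image (fun t => t * y))
        rintro v ⟨hlv, t, hrt, hyv⟩
        have hv : t * y = v := by rw [hyv, ← mul_assoc, hrt.mul_self, one_mul]
        refine ⟨t, ⟨hrt, ?_⟩, hv⟩
        rw [hv]
        exact hlv
      have hsub : {t : W | BruhatLE cs t y} ⊆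
          insert y (⋃ v ∈ {v : W | cs.length v < cs.length y
            ∧ ∃ t, cs.IsReflection t ∧ y = t * v}, {t : W | BruhatLE cs t v}) := by
        intro t ht
        rcases Relation.ReflTransGen.cases_tail ht with h1 | ⟨c, hc1, hc2⟩
        · exact Set.mem_insert_iff.mpr (Or.inl h1.symm)
        · exact Set.mem_insert_iff.mpr (Or.inr (Set.mem_biUnion hc2 hc1))
      apply Set.Finite.subset _ hsub
      apply Set.Finite.insert
      apply Set.Finite.biUnion hpredfin
      intro v hv
      apply ih
      have := hv.1
      omega


lemma qp_mul (a b : Γ) : qp Γ a * qp Γ b = qp Γ (a + b) := by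
  unfold qp
  rw [AddMonoidAlgebra.single_mul_single, one_mul]

lemma qp_zero : qp Γ (0 : Γ) = 1 := by
  rfl

lemma barZ_apply' (f : LZ Γ) (γ : Γ) : (barZ Γ f).coeff γ = f.coeff (-γ) := by
  simp [barZ]

lemma barZ_barZ (f : LZ Γ) : barZ Γ (barZ Γ f) = f := by
  apply AddMonoidAlgebra.ext
  apply Finsupp.ext
  intro γ
  rw [barZ_apply', barZ_apply', neg_neg]

lemma barZ_qp (γ : Γ) : barZ Γ (qp Γ γ) = qp Γ (-γ) := by
  unfold qp barZ
  simp


theorem stmt_12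
    {B W : Type} [Group W] {M : CoxeterMatrix B} (cs : CoxeterSystem M W)
    (Γ : Type) [AddCommGroup Γ] [LinearOrder Γ] [IsOrderedAddMonoid Γ]
    -- `L` is a weight function on `W` with values in `Γ`, nonnegative on simple reflections
    (L : W → Γ)
    (hLadd : ∀ u v : W, cs.length (u * v) = cs.length u + cs.length v →
      L (u * v) = L u + L v)
    (hLpos : ∀ i : B, (0 : Γ) ≤ L (cs.simple i))
    -- `H` is the Hecke algebra of `(W, S, L)`, free over `ℤ[Γ]` with basis `{T_w}`
    {H : Type} [Ring H] [Algebra (LZ Γ) H]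
    (T : Module.Basis W (LZ Γ) H)
    (hTone : T 1 = 1)
    (hTmul₁ : ∀ (i : B) (w : W), cs.length w < cs.length (cs.simple i * w) →
      T (cs.simple i) * T w = T (cs.simple i * w))
    (hTmul₂ : ∀ (i : B) (w : W), cs.length (cs.simple i * w) < cs.length w →
      T (cs.simple i) * T w =
        qp Γ (L (cs.simple i)) • T (cs.simple i * w) + (qp Γ (L (cs.simple i)) - 1) • T w)
    -- the bar involution on `H`
    (barH : H ≃+* H)
    (hbarHsmul : ∀ (a : LZ Γ) (h : H), barH (a • h) = barZ Γ a • barH h)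
    (hbarHT : ∀ i : B, barH (T (cs.simple i)) =
      qp Γ (-(L (cs.simple i))) • T (cs.simple i) + (qp Γ (-(L (cs.simple i))) - 1) • (1 : H))
    -- `E = E_J ⊆ D_J` is an ideal in the left weak Bruhat order
    (J : Set B) (E : Set W)
    (hED : E ⊆ DJ cs J)
    (hIdeal : ∀ y ∈ E, ∀ x : W, IsSuffix cs x y → x ∈ E)
    -- `E` is a `W`-graph ideal: the module `M(E_J, L)` with basis `{Γ_y := G y : y ∈ E}`
    {MM : Type} [AddCommGroup MM] [Module (LZ Γ) MM] [Module H MM]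
    [IsScalarTower (LZ Γ) H MM]
    (G : W → MM)
    (hGbasis : ∃ b : Module.Basis ↥E (LZ Γ) MM, ∀ y : ↥E, b y = G ↑y)
    (hSD : ∀ (i : B) (y : W), y ∈ E → cs.length (cs.simple i * y) < cs.length y →
      T (cs.simple i) • G y =
        qp Γ (L (cs.simple i)) • G (cs.simple i * y) + (qp Γ (L (cs.simple i)) - 1) • G y)
    (hSA : ∀ (i : B) (y : W), y ∈ E → cs.length y < cs.length (cs.simple i * y) →
      cs.simple i * y ∈ E → T (cs.simple i) • G y = G (cs.simple i * y))
    (hWD : ∀ (i : B) (y : W), y ∈ E → cs.length y < cs.length (cs.simple i * y) →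
      cs.simple i * y ∉ DJ cs J → T (cs.simple i) • G y = - G y)
    (hWA : ∀ (i : B) (y : W), y ∈ E → cs.length y < cs.length (cs.simple i * y) →
      cs.simple i * y ∈ DJ cs J → cs.simple i * y ∉ E →
      ∃ rr : W → LZ Γ, (∀ z : W, rr z ≠ 0 → z ∈ E ∧ BruhatLT cs z (cs.simple i * y)) ∧
        (∀ z : W, ∃ g : LZ Γ, rr z = qp Γ (L (cs.simple i)) * g) ∧
        {z : W | rr z ≠ 0}.Finite ∧
        T (cs.simple i) • G y = qp Γ (L (cs.simple i)) • G y - ∑ᶠ z : W, rr z • G z)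
    -- the `ℤ[Γ]`-semilinear bar involution on `M(E_J, L)`
    (barM : MM → MM)
    (hbarMadd : ∀ m m' : MM, barM (m + m') = barM m + barM m')
    (hbarMsmul : ∀ (a : LZ Γ) (m : MM), barM (a • m) = barZ Γ a • barM m)
    (hbarMone : barM (G 1) = G 1)
    (hbarMT : ∀ (w y : W), y ∈ E → barM (T w • G y) = barH (T w) • barM (G y))
    -- the weighted `R`-polynomials
    (Rp : W → W → LZ Γ)
    (hRpzero : ∀ x y : W, x ∉ E ∨ y ∉ E → Rp x y = 0)
    (hRpdef : ∀ y ∈ E, barM (G y) =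
      ∑ᶠ x ∈ E, (((eps cs x * eps cs y : ℤ) : LZ Γ) * qp Γ (-(L y)) * Rp x y) • G x)
    -- the weighted Kazhdan-Lusztig polynomials
    (P : W → W → LZ Γ)
    (hPdiag : ∀ x ∈ E, P x x = 1)
    (hPsupp : ∀ x y : W, ¬ BruhatLE cs x y → P x y = 0)
    (hPdeg : ∀ x y : W, x ∈ E → y ∈ E → BruhatLT cs x y → P x y ≠ 0 →
      ∃ d : Γ, degq Γ (P x y) = (d : WithBot Γ) ∧ d + d < L y - L x)
    (hPdef : ∀ x y : W, x ∈ E → y ∈ E → BruhatLE cs x y →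
      qp Γ (L y - L x) * barZ Γ (P x y) =
        ∑ᶠ t ∈ {t : W | t ∈ E ∧ BruhatLE cs x t ∧ BruhatLE cs t y}, Rp x t * P t y)
    (x y : W) (hx : x ∈ E) (hy : y ∈ E)
    (hxy : BruhatLT cs x y)
    :
    P x y - Rsingle Γ L Rp x y =
      ∑ᶠ t ∈ {t : W | t ∈ E ∧ BruhatLE cs x t ∧ BruhatLT cs t y},
        qp Γ (L y - L t) * Rsingle Γ L Rp x t * barZ Γ (P t y) := by
  classical
  have hS'fin : {t : W | t ∈ E ∧ BruhatLE cs x t ∧ BruhatLT cs t y}.Finite :=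
    (bruhatLE_finite cs y).subset (fun t ht => ht.2.2.1)
  have hyS' : y ∉ {t : W | t ∈ E ∧ BruhatLE cs x t ∧ BruhatLT cs t y} := fun h => h.2.2.2 rfl
  have hins : {t : W | t ∈ E ∧ BruhatLE cs x t ∧ BruhatLE cs t y}
      = insert y {t : W | t ∈ E ∧ BruhatLE cs x t ∧ BruhatLT cs t y} := by
    ext t
    simp only [Set.mem_setOf_eq, Set.mem_insert_iff]
    constructor
    · rintro ⟨h1, h2, h3⟩
      by_cases hty : t = y
      · exact Or.inl hty
      · exact Or.inr ⟨h1, h2, ⟨h3, hty⟩⟩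
    · rintro (rfl | ⟨h1, h2, h3, h4⟩)
      · exact ⟨hy, hxy.1, Relation.ReflTransGen.refl⟩
      · exact ⟨h1, h2, h3⟩
  have key := hPdef x y hx hy hxy.1
  rw [hins, finsum_mem_insert _ hyS' hS'fin, hPdiag y hy, mul_one] at key
  have hPexp : P x y = Rsingle Γ L Rp x y
      + ∑ᶠ t ∈ {t : W | t ∈ E ∧ BruhatLE cs x t ∧ BruhatLT cs t y},
          qp Γ (L y - L t) * Rsingle Γ L Rp x t * barZ Γ (P t y) := by
    have h2 : P x y = qp Γ (L y - L x) * barZ Γ (qp Γ (L y - L x) * barZ Γ (P x y)) := by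
      rw [map_mul, barZ_qp, barZ_barZ, ← mul_assoc, qp_mul]
      have h0 : (L y - L x) + -(L y - L x) = 0 := by abel
      rw [h0, qp_zero, one_mul]
    rw [h2, key, map_add, mul_add]
    congr 1
    rw [finsum_mem_eq_finite_toFinset_sum _ hS'fin, finsum_mem_eq_finite_toFinset_sum _ hS'fin,
      map_sum, Finset.mul_sum]
    apply Finset.sum_congr rfl
    intro t ht
    have hq : qp Γ (L y - L t) * qp Γ (L t - L x) = qp Γ (L y - L x) := by
      rw [qp_mul]
      congr 1
      abel
    have hrs : Rsingle Γ L Rp x t = qp Γ (L t - L x) * barZ Γ (Rp x t) := rfl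
    rw [map_mul, hrs, ← hq]
    ring
  rw [hPexp, add_sub_cancel_left]


end WGI
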